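/- Let f̃ : ℝ² → ℝ² be a lift of a torus homeomorphism, v ∈ ℝ², and M > 0 such that ⟨f̃^n(ỹ) − ỹ − n v, v⟩ ≤ M for every ỹ ∈ ℝ² and every n ≥ 1 (bounded deviation above along v). Suppose x̃ ∈ ℝ² admits a sequence n_k → ∞ with ⟨f̃^{n_k}(x̃) − x̃ − n_k v, v⟩ → 0. Then for every n ≥ 1, ⟨f̃^n(x̃) − x̃ − n v, v⟩ ≥ −M. -/
import Mathlib


open Filter Topology Metric Set

/-- The plane, serving as universal cover of the 2-torus. -/
abbrev R2 := ℝ × ℝ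

/-- Euclidean inner product on the plane. -/
noncomputable def dot2 (u v : R2) : ℝ := u.1 * v.1 + u.2 * v.2

/-- A lift of a torus homeomorphism homotopic to the identity: a homeomorphism of the
plane commuting with all integer translations. -/
def TorusLift (F : R2 → R2) : Prop :=
  IsHomeomorph F ∧ ∀ (x : R2) (m n : ℤ), F (x + ((m : ℝ), (n : ℝ))) = F x + ((m : ℝ), (n : ℝ))

/-- The Misiurewicz–Ziemian rotation set of a lift. -/
def rotSet (F : R2 → R2) : Set R2 :=
  {v | ∃ (n : ℕ → ℕ) (z : ℕ → R2), StrictMono n ∧ (∀ k, 1 ≤ n k) ∧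
    Tendsto (fun k => ((n k : ℝ))⁻¹ • (F^[n k] (z k) - z k)) atTop (𝓝 v)}

/-- A vector is totally irrational if it satisfies no nontrivial integer affine relation. -/
def TotallyIrrational (v : R2) : Prop :=
  ∀ a b c : ℤ, (a : ℝ) * v.1 + (b : ℝ) * v.2 + (c : ℝ) = 0 → a = 0 ∧ b = 0 ∧ c = 0

/-- The 2-torus. -/
abbrev T2 := AddCircle (1 : ℝ) × AddCircle (1 : ℝ)

/-- The covering projection from the plane to the torus. -/
noncomputable def proj : R2 → T2 := fun x => ((x.1 : AddCircle (1 : ℝ)), (x.2 : AddCircle (1 : ℝ)))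

theorem deviation_bounded_below_of_atkinson_recurrence (F : R2 → R2) (hF : TorusLift F)
    (v : R2) (M : ℝ) (hM : 0 < M)
    (hdev : ∀ (y : R2) (n : ℕ), 1 ≤ n → dot2 (F^[n] y - y - (n : ℝ) • v) v ≤ M)
    (x : R2) (nk : ℕ → ℕ) (hnk : StrictMono nk) (hnk1 : ∀ j, 1 ≤ nk j)
    (hlim : Tendsto (fun j => dot2 (F^[nk j] x - x - (nk j : ℝ) • v) v) atTop (𝓝 0)) :
    ∀ n : ℕ, 1 ≤ n → dot2 (F^[n] x - x - (n : ℝ) • v) v ≥ -M := by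
  intro n hn
  -- eventually nk j > n
  have htend : Tendsto nk atTop atTop := hnk.tendsto_atTop
  have hev : ∀ᶠ j in atTop,
      dot2 (F^[nk j] x - x - (nk j : ℝ) • v) v - M ≤ dot2 (F^[n] x - x - (n : ℝ) • v) v := by
    filter_upwards [htend.eventually_ge_atTop (n + 1)] with j hj
    set m := nk j - n with hm
    have hm1 : 1 ≤ m := by omega
    have hsum : nk j = n + m := by omega
    have hco : F^[nk j] x = F^[m] (F^[n] x) := by
      rw [hsum, add_comm, Function.iterate_add_apply F m n]
    have hsplit : dot2 (F^[nk j] x - x - (nk j : ℝ) • v) v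
        = dot2 (F^[n] x - x - (n : ℝ) • v) v
          + dot2 (F^[m] (F^[n] x) - (F^[n] x) - (m : ℝ) • v) v := by
      rw [hco, hsum]
      simp only [dot2, Prod.sub_def, Prod.smul_def, smul_eq_mul, Nat.cast_add]
      ring
    have := hdev (F^[n] x) m hm1
    linarith [hsplit ▸ (le_refl (dot2 (F^[nk j] x - x - (nk j : ℝ) • v) v))]
  have : Tendsto (fun j => dot2 (F^[nk j] x - x - (nk j : ℝ) • v) v - M) atTop (𝓝 (0 - M)) :=
    hlim.sub tendsto_const_nhds
  have := le_of_tendsto this hev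
  linarith
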